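/- arXiv:2601.16496 — 3 statements merged into one kernel-verified Lean document; each statement's English description precedes it below -/
import Mathlib

section
/- Let S be a nonempty finite set, let d : S → ℝ satisfy 0 ≤ d v ≤ 1 for every v ∈ S, let c > 0 and g : S → ℝ satisfy g v ≥ c · d v for every v ∈ S, and let λ ≥ 0. Set m = (1/|S|) · Σ_{v∈S} d v. Then (1/|S|) · Σ_{v∈S} (1 + λ · d v) · g v ≥ c · m · (1 + λ · m). -/
/-- Per-group step of the gradient-share rectification lemma:
for a nonempty finite set `S`, difficulty scores `d v ∈ [0,1]`,
gradient masses `g v ≥ c * d v` with `c > 0`, boosting strength `lam ≥ 0`,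
and mean difficulty `m = (1/|S|) Σ d v`, the boosted average gradient mass
satisfies `(1/|S|) Σ (1 + lam * d v) * g v ≥ c * m * (1 + lam * m)`. -/
theorem boosted_gradient_mass_lower_bound
    {V : Type*} (S : Finset V) (hS : S.Nonempty)
    (d g : V → ℝ)
    (hd0 : ∀ v ∈ S, 0 ≤ d v) (hd1 : ∀ v ∈ S, d v ≤ 1)
    (c : ℝ) (hc : 0 < c)
    (hg : ∀ v ∈ S, g v ≥ c * d v)
    (lam : ℝ) (hlam : 0 ≤ lam) :
    (1 / (S.card : ℝ)) * ∑ v ∈ S, (1 + lam * d v) * g v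
      ≥ c * ((1 / (S.card : ℝ)) * ∑ v ∈ S, d v)
          * (1 + lam * ((1 / (S.card : ℝ)) * ∑ v ∈ S, d v)) := by
  have hn : (0 : ℝ) < (S.card : ℝ) := by
    exact_mod_cast Finset.card_pos.mpr hS
  -- termwise lower bound
  have h1 : ∑ v ∈ S, (1 + lam * d v) * g v
      ≥ ∑ v ∈ S, (c * d v + c * lam * (d v)^2) := by
    apply Finset.sum_le_sum
    intro v hv
    have hdv := hd0 v hv
    have hgv := hg v hv
    have hpos : (0 : ℝ) ≤ 1 + lam * d v := by positivity
    nlinarith [mul_le_mul_of_nonneg_left hgv hpos]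
  have h2 : (∑ v ∈ S, d v)^2 ≤ (S.card : ℝ) * ∑ v ∈ S, (d v)^2 :=
    sq_sum_le_card_mul_sum_sq
  have hsum : ∑ v ∈ S, (c * d v + c * lam * (d v)^2)
      = c * ∑ v ∈ S, d v + c * lam * ∑ v ∈ S, (d v)^2 := by
    rw [Finset.sum_add_distrib, ← Finset.mul_sum, ← Finset.mul_sum]
  rw [hsum] at h1
  set A := ∑ v ∈ S, d v with hA
  set B := ∑ v ∈ S, (1 + lam * d v) * g v with hB
  set D := ∑ v ∈ S, (d v)^2 with hD
  have key : c * A * ((S.card : ℝ) + lam * A) ≤ B * (S.card : ℝ) := by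
    nlinarith [mul_le_mul_of_nonneg_left h2 (mul_nonneg hc.le hlam),
      mul_le_mul_of_nonneg_right h1 hn.le]
  rw [ge_iff_le]
  calc c * (1 / (S.card : ℝ) * A) * (1 + lam * (1 / (S.card : ℝ) * A))
      = c * A * ((S.card : ℝ) + lam * A) / (S.card : ℝ)^2 := by
        rw [eq_div_iff (by positivity : ((S.card : ℝ))^2 ≠ 0)]
        field_simp
    _ ≤ B * (S.card : ℝ) / (S.card : ℝ)^2 := by
        apply div_le_div_of_nonneg_right key
        positivity
    _ = 1 / (S.card : ℝ) * B := by
        field_simp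
end

section
/- Let V_min and V_maj be nonempty finite sets, let d be a real-valued function on V_min ∪ V_maj with 0 ≤ d v ≤ 1 for all v, let c > 0 and define g v = c · d v for all v. Suppose d is constant on V_maj, equal to its mean m_maj = (1/|V_maj|) Σ_{v∈V_maj} d v, and that m_maj > 0. Let m_min = (1/|V_min|) Σ_{v∈V_min} d v, and let λ ≥ 0. Define GSD_base = ((1/|V_min|) Σ_{v∈V_min} g v) / ((1/|V_maj|) Σ_{v∈V_maj} g v) and GSD_boost = ((1/|V_min|) Σ_{v∈V_min} (1 + λ d v) g v) / ((1/|V_maj|) Σ_{v∈V_maj} (1 + λ d v) g v). Then GSD_boost ≥ GSD_base · (1 + λ · m_min) / (1 + λ · m_maj). -/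
/-- Gradient-share rectification (Lemma 1): with difficulty scores `d v ∈ [0,1]`,
exact difficulty–gradient proportionality `g v = c * d v` (`c > 0`),
difficulty constant equal to its mean `mmaj > 0` on the majority group,
minority mean difficulty `mmin`, and boosting strength `lam ≥ 0`,
the boosted Gradient Share Disparity satisfies
`GSD_boost ≥ GSD_base * (1 + lam * mmin) / (1 + lam * mmaj)`. -/
theorem gsd_rectification
    {V : Type*} [DecidableEq V] (Vmin Vmaj : Finset V)
    (hmin : Vmin.Nonempty) (hmaj : Vmaj.Nonempty)
    (d : V → ℝ)
    (hd0 : ∀ v ∈ Vmin ∪ Vmaj, 0 ≤ d v) (hd1 : ∀ v ∈ Vmin ∪ Vmaj, d v ≤ 1)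
    (c : ℝ) (hc : 0 < c)
    (g : V → ℝ) (hg : ∀ v, g v = c * d v)
    (mmaj : ℝ) (hmmaj : mmaj = (1 / (Vmaj.card : ℝ)) * ∑ v ∈ Vmaj, d v)
    (hconst : ∀ v ∈ Vmaj, d v = mmaj)
    (hmmajpos : 0 < mmaj)
    (mmin : ℝ) (hmmin : mmin = (1 / (Vmin.card : ℝ)) * ∑ v ∈ Vmin, d v)
    (lam : ℝ) (hlam : 0 ≤ lam) :
    ((1 / (Vmin.card : ℝ)) * ∑ v ∈ Vmin, (1 + lam * d v) * g v)
        / ((1 / (Vmaj.card : ℝ)) * ∑ v ∈ Vmaj, (1 + lam * d v) * g v)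
      ≥ (((1 / (Vmin.card : ℝ)) * ∑ v ∈ Vmin, g v)
            / ((1 / (Vmaj.card : ℝ)) * ∑ v ∈ Vmaj, g v))
          * ((1 + lam * mmin) / (1 + lam * mmaj)) := by
  have hn : (0 : ℝ) < (Vmin.card : ℝ) := by
    exact_mod_cast Finset.card_pos.mpr hmin
  have hN : (0 : ℝ) < (Vmaj.card : ℝ) := by
    exact_mod_cast Finset.card_pos.mpr hmaj
  -- majority sums
  have hmajg : ∑ v ∈ Vmaj, g v = (Vmaj.card : ℝ) * (c * mmaj) := by
    rw [Finset.sum_congr rfl (fun v hv => by rw [hg, hconst v hv]),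
      Finset.sum_const, nsmul_eq_mul]
  have hmajb : ∑ v ∈ Vmaj, (1 + lam * d v) * g v
      = (Vmaj.card : ℝ) * ((1 + lam * mmaj) * (c * mmaj)) := by
    rw [Finset.sum_congr rfl (fun v hv => by rw [hg, hconst v hv]),
      Finset.sum_const, nsmul_eq_mul]
  -- minority sums
  set S1 := ∑ v ∈ Vmin, d v with hS1
  set S2 := ∑ v ∈ Vmin, d v ^ 2 with hS2
  have hming : ∑ v ∈ Vmin, g v = c * S1 := by
    rw [Finset.sum_congr rfl (fun v _ => hg v), ← Finset.mul_sum]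
  have hminb : ∑ v ∈ Vmin, (1 + lam * d v) * g v = c * (S1 + lam * S2) := by
    have h : ∀ v ∈ Vmin, (1 + lam * d v) * g v = c * d v + lam * c * d v ^ 2 :=
      fun v _ => by rw [hg v]; ring
    rw [Finset.sum_congr rfl h, Finset.sum_add_distrib, ← Finset.mul_sum,
      ← Finset.mul_sum]
    ring
  have hjensen : S1 ^ 2 ≤ (Vmin.card : ℝ) * S2 := by
    have := sq_sum_le_card_mul_sum_sq (s := Vmin) (f := d)
    exact_mod_cast this
  have hS1nn : 0 ≤ S1 :=
    Finset.sum_nonneg fun v hv => hd0 v (Finset.mem_union_left _ hv)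
  have hmminnn : 0 ≤ mmin := by
    rw [hmmin]; positivity
  have h1 : (0:ℝ) < 1 + lam * mmaj := by positivity
  have h2 : (0:ℝ) < c * mmaj := by positivity
  rw [hmajg, hmajb, hming, hminb]
  have hden1 : 1 / (Vmaj.card : ℝ) * ((Vmaj.card : ℝ) * ((1 + lam * mmaj) * (c * mmaj)))
      = (1 + lam * mmaj) * (c * mmaj) := by field_simp
  have hden2 : 1 / (Vmaj.card : ℝ) * ((Vmaj.card : ℝ) * (c * mmaj)) = c * mmaj := by
    field_simp
  rw [hden1, hden2, ge_iff_le, div_mul_div_comm,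
    div_le_div_iff₀ (by positivity) (by positivity)]
  have key : S1 * (1 + lam * mmin) ≤ S1 + lam * S2 := by
    have : lam * (S1 * mmin) ≤ lam * S2 := by
      apply mul_le_mul_of_nonneg_left _ hlam
      have e : S1 * (1 / (Vmin.card : ℝ) * S1) = S1 ^ 2 / (Vmin.card : ℝ) := by ring
      rw [hmmin, e, div_le_iff₀ hn]
      linarith [hjensen]
    nlinarith
  have hfac : (0:ℝ) ≤ 1 / (Vmin.card : ℝ) * c * ((1 + lam * mmaj) * (c * mmaj)) := by
    positivity
  nlinarith [mul_le_mul_of_nonneg_left key hfac]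
end

section
/- Let H be a real inner product space, n ≥ 1, let Δ : Fin n → H be client updates and g ∈ H a direction. Set a m = ⟪Δ m, g⟫ for each m. Let τ : Fin n → ℝ satisfy τ m > 0 for all m, and suppose that for all m, m', if a m < a m' then τ m ≤ τ m'. Let ε > 0, and for weights w : Fin n → ℝ define DR(w) = ⟪Σ_m w m • Δ m, g⟫ / ((1/n) · Σ_m max(a m, 0) + ε). Then DR with boosted weights w_boost m = τ m / Σ_j τ j satisfies DR(w_boost) ≥ DR(w_avg), where w_avg m = 1/n are the uniform FedAvg weights. -/
/-- Trust-gated aggregation improves the dilution ratio (first claim of Theorem 2):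
with alignments `a m = ⟪Δ m, g⟫`, positive trust scores `τ` monovarying with
alignment, and `DR(w) = ⟪Σ_m w m • Δ m, g⟫ / ((1/n) Σ_m max(a m, 0) + ε)`,
the trusted weights `τ m / Σ_j τ j` give a dilution ratio at least as large as
the uniform FedAvg weights `1/n`. -/
theorem trust_gated_DR_ge_fedavg
    {H : Type*} [NormedAddCommGroup H] [InnerProductSpace ℝ H]
    (n : ℕ) (hn : 1 ≤ n)
    (Δ : Fin n → H) (g : H)
    (τ : Fin n → ℝ) (hτ : ∀ m, 0 < τ m)
    (hmono : ∀ m m', (inner ℝ (Δ m) g : ℝ) < (inner ℝ (Δ m') g : ℝ) → τ m ≤ τ m')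
    (ε : ℝ) (hε : 0 < ε) :
    (inner ℝ (∑ m, (τ m / ∑ j, τ j) • Δ m) g : ℝ)
        / ((1 / (n : ℝ)) * (∑ m, max ((inner ℝ (Δ m) g : ℝ)) 0) + ε)
      ≥ (inner ℝ (∑ m, ((1 : ℝ) / (n : ℝ)) • Δ m) g : ℝ)
        / ((1 / (n : ℝ)) * (∑ m, max ((inner ℝ (Δ m) g : ℝ)) 0) + ε) := by
  set a : Fin n → ℝ := fun m => (inner ℝ (Δ m) g : ℝ) with ha
  have hnpos : (0 : ℝ) < n := by exact_mod_cast hn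
  have hτsum : (0 : ℝ) < ∑ j, τ j := by
    apply Finset.sum_pos (fun j _ => hτ j)
    exact ⟨⟨0, hn⟩, Finset.mem_univ _⟩
  have hden : 0 < (1 / (n : ℝ)) * (∑ m, max (a m) 0) + ε := by
    have h1 : 0 ≤ (1 / (n : ℝ)) * (∑ m, max (a m) 0) := by
      apply mul_nonneg (by positivity)
      exact Finset.sum_nonneg fun m _ => le_max_right _ _
    linarith
  rw [ge_iff_le]
  apply div_le_div_of_nonneg_right ?_ hden.le
  -- numerator inequality
  have hmon : Monovary τ a := fun m m' h => hmono m m' h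
  have cheb := hmon.sum_mul_sum_le_card_mul_sum
  simp only [Finset.card_univ, Fintype.card_fin] at cheb
  have h1 : (inner ℝ (∑ m, ((1 : ℝ) / (n : ℝ)) • Δ m) g : ℝ)
      = (∑ m, a m) / n := by
    rw [sum_inner]
    simp only [real_inner_smul_left, ha]
    rw [Finset.sum_div]
    exact Finset.sum_congr rfl fun m _ => by ring
  have h2 : (inner ℝ (∑ m, (τ m / ∑ j, τ j) • Δ m) g : ℝ)
      = (∑ m, τ m * a m) / (∑ j, τ j) := by
    rw [sum_inner]
    simp only [real_inner_smul_left, ha]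
    rw [Finset.sum_div]
    exact Finset.sum_congr rfl fun m _ => by ring
  rw [h1, h2, div_le_div_iff₀ hnpos hτsum]
  calc (∑ m, a m) * ∑ j, τ j = (∑ j, τ j) * ∑ m, a m := by ring
    _ ≤ n * ∑ m, τ m * a m := cheb
    _ = (∑ m, τ m * a m) * n := by ring
end
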